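/- Let G be a Class 2 graph with critical edge e₁ = y₀y₁, φ ∈ C^Δ(G − e₁), and let K = (y₀, e₁, y₁, e₂, y₂, e₃, y₃) be a Kierstead path with respect to e₁ and φ. Then |φ̄(y₃) ∩ (φ̄(y₀) ∪ φ̄(y₁))| ≤ 1. -/

import Mathlib

open SimpleGraph

/-- A proper `k`-edge-coloring of `G` with colors in `{1,…,k}`: every edge receives a color
in `{1,…,k}` and distinct edges sharing a vertex receive distinct colors. -/
def IsProperEdgeColoring {V : Type*} (G : SimpleGraph V) (k : ℕ) (c : Sym2 V → ℕ) : Prop :=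
  (∀ e ∈ G.edgeSet, c e ∈ Finset.Icc 1 k) ∧
  ∀ e ∈ G.edgeSet, ∀ f ∈ G.edgeSet, e ≠ f → (∃ v, v ∈ e ∧ v ∈ f) → c e ≠ c f

/-- `G` admits a proper `k`-edge-coloring. -/
def EdgeColorable {V : Type*} (G : SimpleGraph V) (k : ℕ) : Prop :=
  ∃ c, IsProperEdgeColoring G k c

/-- The chromatic index of `G`: the least `k` such that `G` is `k`-edge-colorable. -/
noncomputable def chromIndex {V : Type*} (G : SimpleGraph V) : ℕ :=
  sInf {k | EdgeColorable G k}


/-- The set of colors of `{1,…,k}` missing at `v` under the coloring `c`, i.e. not assigned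
to any edge of `G` incident with `v`. -/
def missing {V : Type*} (G : SimpleGraph V) (k : ℕ) (c : Sym2 V → ℕ) (v : V) : Set ℕ :=
  {α | α ∈ Finset.Icc 1 k ∧ ¬ ∃ u, G.Adj v u ∧ c s(v, u) = α}

namespace Stmt9

open scoped Classical

variable {V : Type*}

/-- `z` is present at `v`. -/
def pres (G' : SimpleGraph V) (c : Sym2 V → ℕ) (v : V) (z : ℕ) : Prop :=
  ∃ u, G'.Adj v u ∧ c s(v, u) = z

lemma mem_missing {G' : SimpleGraph V} {k : ℕ} {c : Sym2 V → ℕ} {v : V} {α : ℕ} :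
    α ∈ missing G' k c v ↔ α ∈ Finset.Icc 1 k ∧ ¬ pres G' c v α := Iff.rfl

/-- The subgraph of edges colored `x` or `y`. -/
def Hg (G' : SimpleGraph V) (c : Sym2 V → ℕ) (x y : ℕ) : SimpleGraph V where
  Adj u v := G'.Adj u v ∧ (c s(u, v) = x ∨ c s(u, v) = y)
  symm := by
    constructor
    intro u v h
    refine ⟨h.1.symm, ?_⟩
    rw [Sym2.eq_swap]
    exact h.2
  loopless := ⟨fun v h => G'.loopless.irrefl v h.1⟩

lemma Hg_le {G' : SimpleGraph V} {c : Sym2 V → ℕ} {x y : ℕ} : Hg G' c x y ≤ G' :=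
  fun _ _ h => h.1

/-- swap two colors -/
def swc (x y z : ℕ) : ℕ := if z = x then y else if z = y then x else z

lemma swc_swc (x y z : ℕ) : swc x y (swc x y z) = z := by
  unfold swc; split_ifs <;> omega

lemma swc_inj {x y a b : ℕ} (h : swc x y a = swc x y b) : a = b := by
  have := congrArg (swc x y) h
  rwa [swc_swc, swc_swc] at this

lemma swc_mem {x y z : ℕ} (h : z = x ∨ z = y) : swc x y z = x ∨ swc x y z = y := by
  unfold swc; split_ifs <;> tauto

lemma swc_x {x y : ℕ} : swc x y x = y := by simp [swc]

lemma swc_y {x y : ℕ} (hxy : x ≠ y) : swc x y y = x := by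
  unfold swc
  rw [if_neg (Ne.symm hxy), if_pos rfl]

/-- swap the colors x,y on the component (of the (x,y)-subgraph) of the anchor `a`. -/
noncomputable def swap (G' : SimpleGraph V) (c : Sym2 V → ℕ) (x y : ℕ) (a : V) :
    Sym2 V → ℕ :=
  fun e => if e ∈ (Hg G' c x y).edgeSet ∧ (∃ v ∈ e, (Hg G' c x y).Reachable a v)
    then swc x y (c e) else c e

lemma swap_spec (G' : SimpleGraph V) (c : Sym2 V → ℕ) (x y : ℕ) (a : V) (u v : V) :
    swap G' c x y a s(u, v) =
      if (Hg G' c x y).Adj u v ∧ (Hg G' c x y).Reachable a u then swc x y (c s(u, v))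
      else c s(u, v) := by
  unfold swap
  refine if_congr ?_ rfl rfl
  rw [mem_edgeSet]
  constructor
  · rintro ⟨hadj, w, hw, hr⟩
    refine ⟨hadj, ?_⟩
    rcases Sym2.mem_iff.mp hw with rfl | rfl
    · exact hr
    · exact hr.trans hadj.symm.reachable
  · rintro ⟨hadj, hr⟩
    exact ⟨hadj, u, Sym2.mem_mk_left u v, hr⟩

lemma swap_eq_of_not_reach {G' : SimpleGraph V} {c : Sym2 V → ℕ} {x y : ℕ} {a : V} {u v : V}
    (h : ¬ (Hg G' c x y).Reachable a u) : swap G' c x y a s(u, v) = c s(u, v) := by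
  rw [swap_spec, if_neg]
  rintro ⟨-, hr⟩
  exact h hr

lemma swap_eq_of_not_color {G' : SimpleGraph V} {c : Sym2 V → ℕ} {x y : ℕ} {a : V} {u v : V}
    (h1 : c s(u, v) ≠ x) (h2 : c s(u, v) ≠ y) : swap G' c x y a s(u, v) = c s(u, v) := by
  rw [swap_spec, if_neg]
  rintro ⟨⟨-, hcol⟩, -⟩
  tauto

lemma swap_fire {G' : SimpleGraph V} {c : Sym2 V → ℕ} {x y : ℕ} {a : V} {u v : V}
    (hadj : G'.Adj u v) (hcol : c s(u, v) = x ∨ c s(u, v) = y)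
    (hr : (Hg G' c x y).Reachable a u) :
    swap G' c x y a s(u, v) = swc x y (c s(u, v)) := by
  rw [swap_spec, if_pos ⟨⟨hadj, hcol⟩, hr⟩]

lemma pres_swap_not_reach {G' : SimpleGraph V} {c : Sym2 V → ℕ} {x y : ℕ} {a : V} {v : V}
    (h : ¬ (Hg G' c x y).Reachable a v) (z : ℕ) :
    pres G' (swap G' c x y a) v z ↔ pres G' c v z := by
  unfold pres
  constructor <;> rintro ⟨u, h1, h2⟩ <;> refine ⟨u, h1, ?_⟩
  · rwa [swap_eq_of_not_reach h] at h2
  · rwa [swap_eq_of_not_reach h]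

lemma pres_swap_x {G' : SimpleGraph V} {c : Sym2 V → ℕ} {x y : ℕ} {a : V} {v : V}
    (hxy : x ≠ y) (hr : (Hg G' c x y).Reachable a v) :
    pres G' (swap G' c x y a) v x ↔ pres G' c v y := by
  constructor
  · rintro ⟨u, h1, h2⟩
    refine ⟨u, h1, ?_⟩
    rw [swap_spec] at h2
    split_ifs at h2 with hf
    · rcases hf.1.2 with h3 | h3
      · rw [h3, swc_x] at h2; exact absurd h2.symm hxy
      · exact h3
    · exfalso
      exact hf ⟨⟨h1, Or.inl h2⟩, hr⟩
  · rintro ⟨u, h1, h2⟩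
    refine ⟨u, h1, ?_⟩
    rw [swap_fire h1 (Or.inr h2) hr, h2, swc_y hxy]

lemma pres_swap_y {G' : SimpleGraph V} {c : Sym2 V → ℕ} {x y : ℕ} {a : V} {v : V}
    (hxy : x ≠ y) (hr : (Hg G' c x y).Reachable a v) :
    pres G' (swap G' c x y a) v y ↔ pres G' c v x := by
  constructor
  · rintro ⟨u, h1, h2⟩
    refine ⟨u, h1, ?_⟩
    rw [swap_spec] at h2
    split_ifs at h2 with hf
    · rcases hf.1.2 with h3 | h3
      · exact h3
      · rw [h3, swc_y hxy] at h2; exact absurd h2 hxy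
    · exfalso
      exact hf ⟨⟨h1, Or.inr h2⟩, hr⟩
  · rintro ⟨u, h1, h2⟩
    refine ⟨u, h1, ?_⟩
    rw [swap_fire h1 (Or.inl h2) hr, h2, swc_x]

lemma pres_swap_other {G' : SimpleGraph V} {c : Sym2 V → ℕ} {x y : ℕ} {a : V} {v : V}
    {z : ℕ} (hzx : z ≠ x) (hzy : z ≠ y) :
    pres G' (swap G' c x y a) v z ↔ pres G' c v z := by
  constructor
  · rintro ⟨u, h1, h2⟩
    refine ⟨u, h1, ?_⟩
    rw [swap_spec] at h2
    split_ifs at h2 with hf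
    · rcases swc_mem (x := x) (y := y) hf.1.2 with h3 | h3 <;> rw [h2] at h3 <;> tauto
    · exact h2
  · rintro ⟨u, h1, h2⟩
    refine ⟨u, h1, ?_⟩
    rwa [swap_eq_of_not_color (by rwa [h2]) (by rwa [h2])]

lemma missing_swap_not_reach {G' : SimpleGraph V} {k : ℕ} {c : Sym2 V → ℕ} {x y : ℕ} {a : V}
    {v : V} (h : ¬ (Hg G' c x y).Reachable a v) (z : ℕ) :
    z ∈ missing G' k (swap G' c x y a) v ↔ z ∈ missing G' k c v := by
  rw [mem_missing, mem_missing, pres_swap_not_reach h]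

lemma missing_swap_x {G' : SimpleGraph V} {k : ℕ} {c : Sym2 V → ℕ} {x y : ℕ} {a : V} {v : V}
    (hxy : x ≠ y) (hx : x ∈ Finset.Icc 1 k) (hy : y ∈ Finset.Icc 1 k)
    (hr : (Hg G' c x y).Reachable a v) :
    x ∈ missing G' k (swap G' c x y a) v ↔ y ∈ missing G' k c v := by
  rw [mem_missing, mem_missing, pres_swap_x hxy hr]
  tauto

lemma missing_swap_y {G' : SimpleGraph V} {k : ℕ} {c : Sym2 V → ℕ} {x y : ℕ} {a : V} {v : V}
    (hxy : x ≠ y) (hx : x ∈ Finset.Icc 1 k) (hy : y ∈ Finset.Icc 1 k)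
    (hr : (Hg G' c x y).Reachable a v) :
    y ∈ missing G' k (swap G' c x y a) v ↔ x ∈ missing G' k c v := by
  rw [mem_missing, mem_missing, pres_swap_y hxy hr]
  tauto

lemma missing_swap_other {G' : SimpleGraph V} {k : ℕ} {c : Sym2 V → ℕ} {x y : ℕ} {a : V}
    {v : V} {z : ℕ} (hzx : z ≠ x) (hzy : z ≠ y) :
    z ∈ missing G' k (swap G' c x y a) v ↔ z ∈ missing G' k c v := by
  rw [mem_missing, mem_missing, pres_swap_other hzx hzy]

lemma edge_repr {G' : SimpleGraph V} {e : Sym2 V} (he : e ∈ G'.edgeSet) {v : V} (hv : v ∈ e) :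
    ∃ u, G'.Adj v u ∧ e = s(v, u) := by
  induction e using Sym2.ind with
  | _ p q =>
    rw [mem_edgeSet] at he
    rcases Sym2.mem_iff.mp hv with rfl | rfl
    · exact ⟨q, he, rfl⟩
    · exact ⟨p, he.symm, Sym2.eq_swap⟩

lemma swap_proper {G' : SimpleGraph V} {k : ℕ} {c : Sym2 V → ℕ} {x y : ℕ} {a : V}
    (hc : IsProperEdgeColoring G' k c) (hx : x ∈ Finset.Icc 1 k) (hy : y ∈ Finset.Icc 1 k) :
    IsProperEdgeColoring G' k (swap G' c x y a) := by
  constructor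
  · intro e he
    induction e using Sym2.ind with
    | _ p q =>
      rw [swap_spec]
      split_ifs with hf
      · unfold swc
        split_ifs
        · exact hy
        · exact hx
        · exact hc.1 _ he
      · exact hc.1 _ he
  · intro e he f hf hef ⟨v, hve, hvf⟩
    obtain ⟨b, hab, rfl⟩ := edge_repr he hve
    obtain ⟨d, had, rfl⟩ := edge_repr hf hvf
    have hbd : b ≠ d := fun h => hef (by rw [h])
    have hcol := hc.2 _ he _ hf hef ⟨v, Sym2.mem_mk_left _ _, Sym2.mem_mk_left _ _⟩
    rw [swap_spec, swap_spec]
    split_ifs with h1 h2 h2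
    · exact fun h => hcol (swc_inj h)
    · -- first fires, second doesn't
      intro h
      rcases swc_mem (x := x) (y := y) h1.1.2 with h3 | h3 <;> rw [h] at h3 <;>
        exact h2 ⟨⟨had, by tauto⟩, h1.2⟩
    · intro h
      rcases swc_mem (x := x) (y := y) h2.1.2 with h3 | h3 <;> rw [← h] at h3 <;>
        exact h1 ⟨⟨hab, by tauto⟩, h2.2⟩
    · exact hcol


lemma F0 {V : Type*} [Fintype V] (G : SimpleGraph V) [DecidableRel G.Adj]
    (hclass2 : chromIndex G = G.maxDegree + 1) (y0 y1 : V) (h01 : G.Adj y0 y1)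
    (c : Sym2 V → ℕ) (hc : IsProperEdgeColoring (G.deleteEdges {s(y0, y1)}) G.maxDegree c)
    (σ : ℕ) (h0 : σ ∈ missing (G.deleteEdges {s(y0, y1)}) G.maxDegree c y0)
    (h1 : σ ∈ missing (G.deleteEdges {s(y0, y1)}) G.maxDegree c y1) : False := by
  set G' := G.deleteEdges {s(y0, y1)} with hG'
  have hGsub : ∀ f ∈ G.edgeSet, f ≠ s(y0, y1) → f ∈ G'.edgeSet := by
    intro f hf hne
    rw [hG', edgeSet_deleteEdges]
    exact ⟨hf, by simpa using hne⟩
  have hproper : IsProperEdgeColoring G G.maxDegree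
      (fun e => if e = s(y0, y1) then σ else c e) := by
    constructor
    · intro e he
      by_cases h : e = s(y0, y1)
      · simpa [h] using h0.1
      · simpa [h] using hc.1 e (hGsub e he h)
    · rintro e he f hf hef ⟨v, hve, hvf⟩
      by_cases h : e = s(y0, y1) <;> by_cases h' : f = s(y0, y1)
      · exact absurd (h.trans h'.symm) hef
      · simp only [if_pos h, if_neg h']
        subst h
        have hσv : σ ∈ missing G' G.maxDegree c v := by
          rcases Sym2.mem_iff.mp hve with rfl | rfl
          exacts [h0, h1]
        obtain ⟨w, hw, rfl⟩ := edge_repr (hGsub f hf h') hvf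
        intro hcontra
        exact hσv.2 ⟨w, hw, hcontra.symm⟩
      · simp only [if_neg h, if_pos h']
        subst h'
        have hσv : σ ∈ missing G' G.maxDegree c v := by
          rcases Sym2.mem_iff.mp hvf with rfl | rfl
          exacts [h0, h1]
        obtain ⟨w, hw, rfl⟩ := edge_repr (hGsub e he h) hve
        intro hcontra
        exact hσv.2 ⟨w, hw, hcontra⟩
      · simp only [if_neg h, if_neg h']
        exact hc.2 e (hGsub e he h) f (hGsub f hf h') hef ⟨v, hve, hvf⟩
  have : chromIndex G ≤ G.maxDegree := Nat.sInf_le ⟨_, hproper⟩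
  omega

lemma F2 {V : Type*} [Fintype V] {G' : SimpleGraph V} {k : ℕ} {c : Sym2 V → ℕ}
    (hc : IsProperEdgeColoring G' k c) (x y : ℕ) {u v w : V}
    (huv : u ≠ v) (huw : u ≠ w) (hvw : v ≠ w)
    (hu : ¬ pres G' c u x ∨ ¬ pres G' c u y)
    (hv : ¬ pres G' c v x ∨ ¬ pres G' c v y)
    (hw : ¬ pres G' c w x ∨ ¬ pres G' c w y)
    (Ruv : (Hg G' c x y).Reachable u v) (Ruw : (Hg G' c x y).Reachable u w) : False := by
  set H : SimpleGraph V := Hg G' c x y with hH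
  have hedge : ∀ t n1 n2 : V, H.Adj t n1 → H.Adj t n2 → c s(t, n1) = c s(t, n2) → n1 = n2 := by
    intro t n1 n2 h1 h2 heq
    by_contra hne
    have hEdgeNe : s(t, n1) ≠ s(t, n2) := by
      intro hE
      rcases Sym2.eq_iff.mp hE with ⟨-, h⟩ | ⟨h, -⟩
      · exact hne h
      · exact H.loopless.irrefl n2 (h ▸ h2)
    exact hc.2 _ ((G'.mem_edgeSet).mpr h1.1) _ ((G'.mem_edgeSet).mpr h2.1) hEdgeNe
      ⟨t, Sym2.mem_mk_left _ _, Sym2.mem_mk_left _ _⟩ heq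
  have hinj : ∀ t : V, Set.InjOn (fun n => c s(t, n)) (H.neighborFinset t : Set V) := by
    intro t n1 h1 n2 h2 heq
    exact hedge t n1 n2 (by simpa using h1) (by simpa using h2) heq
  have hdeg2 : ∀ t, H.degree t ≤ 2 := by
    intro t
    have : H.degree t ≤ ({x, y} : Finset ℕ).card := by
      apply Finset.card_le_card_of_injOn (fun n => c s(t, n)) _ (hinj t)
      intro n hn
      rw [Finset.mem_coe, mem_neighborFinset] at hn
      rcases hn.2 with h | h <;> simp [h]
    calc H.degree t ≤ ({x, y} : Finset ℕ).card := this
      _ ≤ 2 := Finset.card_insert_le _ _ |>.trans (by simp)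
  have hdeg1 : ∀ t, (¬ pres G' c t x ∨ ¬ pres G' c t y) → H.degree t ≤ 1 := by
    intro t ht
    rcases ht with ht | ht
    · have : H.degree t ≤ ({y} : Finset ℕ).card := by
        apply Finset.card_le_card_of_injOn (fun n => c s(t, n)) _ (hinj t)
        intro n hn
        rw [Finset.mem_coe, mem_neighborFinset] at hn
        rcases hn.2 with h | h
        · exact absurd ⟨n, hn.1, h⟩ ht
        · simp [h]
      simpa using this
    · have : H.degree t ≤ ({x} : Finset ℕ).card := by
        apply Finset.card_le_card_of_injOn (fun n => c s(t, n)) _ (hinj t)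
        intro n hn
        rw [Finset.mem_coe, mem_neighborFinset] at hn
        rcases hn.2 with h | h
        · simp [h]
        · exact absurd ⟨n, hn.1, h⟩ ht
      simpa using this
  set C : Finset V := Finset.univ.filter (fun t => H.Reachable u t) with hC
  have hCu : u ∈ C := Finset.mem_filter.mpr ⟨Finset.mem_univ _, Reachable.refl u⟩
  have hCv : v ∈ C := Finset.mem_filter.mpr ⟨Finset.mem_univ _, Ruv⟩
  have hCw : w ∈ C := Finset.mem_filter.mpr ⟨Finset.mem_univ _, Ruw⟩
  set K : SimpleGraph V :=
    { Adj := fun p q => H.Adj p q ∧ H.Reachable u p ∧ H.Reachable u q,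
      symm := ⟨by rintro p q ⟨h1, h2, h3⟩; exact ⟨h1.symm, h3, h2⟩⟩,
      loopless := ⟨fun p h => H.loopless.irrefl p h.1⟩ } with hK
  have hKdegC : ∀ t ∈ C, K.degree t = H.degree t := by
    intro t ht
    have hrt : H.Reachable u t := by
      rw [hC] at ht; simpa using ht
    unfold SimpleGraph.degree
    congr 1
    ext n
    simp only [mem_neighborFinset]
    constructor
    · exact fun h => h.1
    · exact fun h => ⟨h, hrt, hrt.trans h.reachable⟩
  have hKdeg0 : ∀ t ∉ C, K.degree t = 0 := by
    intro t ht
    have : K.neighborFinset t = ∅ := by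
      ext n
      simp only [mem_neighborFinset, Finset.notMem_empty, iff_false]
      rintro ⟨-, h2, -⟩
      exact ht (by rw [hC]; simpa using h2)
    unfold SimpleGraph.degree
    rw [this, Finset.card_empty]
  have hand : ∑ t, K.degree t = 2 * K.edgeFinset.card := K.sum_degrees_eq_twice_card_edges
  have hsum1 : ∑ t ∈ C, H.degree t = ∑ t, K.degree t := by
    rw [← Finset.sum_subset (Finset.subset_univ C) (fun t _ ht => hKdeg0 t ht)]
    exact Finset.sum_congr rfl (fun t ht => (hKdegC t ht).symm)
  -- upper bound
  have hTsub : ({u, v, w} : Finset V) ⊆ C := by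
    intro t ht
    simp only [Finset.mem_insert, Finset.mem_singleton] at ht
    rcases ht with rfl | rfl | rfl <;> assumption
  have hTcard : ({u, v, w} : Finset V).card = 3 := by
    rw [Finset.card_insert_of_notMem (by simp [huv, huw]),
      Finset.card_insert_of_notMem (by simp [hvw]), Finset.card_singleton]
  have hsumT : ∑ t ∈ ({u, v, w} : Finset V), H.degree t ≤ 3 := by
    rw [Finset.sum_insert (by simp [huv, huw]), Finset.sum_insert (by simp [hvw]),
      Finset.sum_singleton]
    have h1 := hdeg1 u hu
    have h2 := hdeg1 v hv
    have h3 := hdeg1 w hw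
    omega
  have hsumRest : ∑ t ∈ C \ ({u, v, w} : Finset V), H.degree t
      ≤ (C \ ({u, v, w} : Finset V)).card * 2 := by
    apply Finset.sum_le_card_nsmul
    intro t _
    exact hdeg2 t
  have hsplit : ∑ t ∈ C \ ({u, v, w} : Finset V), H.degree t
      + ∑ t ∈ ({u, v, w} : Finset V), H.degree t = ∑ t ∈ C, H.degree t :=
    Finset.sum_sdiff hTsub
  have hcardsplit : (C \ ({u, v, w} : Finset V)).card + 3 = C.card := by
    rw [← hTcard]
    exact Finset.card_sdiff_add_card_eq_card hTsub
  -- lower bound via parent injection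
  have hparent : ∀ t ∈ C.erase u, ∃ z, K.Adj z t ∧ H.dist u z + 1 = H.dist u t := by
    intro t ht
    rw [Finset.mem_erase] at ht
    have htu : t ≠ u := ht.1
    have hrt : H.Reachable u t := by
      have := ht.2; rw [hC] at this; simpa using this
    obtain ⟨p, hp⟩ := hrt.exists_walk_length_eq_dist
    obtain ⟨z, hadj, q, hq⟩ := Walk.exists_eq_cons_of_ne htu p.reverse
    have hlenq : q.length + 1 = H.dist u t := by
      have h := congrArg Walk.length hq
      rw [Walk.length_reverse, Walk.length_cons] at h
      omega
    have hruz : H.Reachable u z := ⟨q.reverse⟩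
    have hdz_le : H.dist u z ≤ q.length := by
      have := SimpleGraph.dist_le q.reverse
      simpa using this
    have hdt_le : H.dist u t ≤ H.dist u z + 1 := by
      obtain ⟨o, ho⟩ := hruz.exists_walk_length_eq_dist
      have := SimpleGraph.dist_le (o.concat hadj.symm)
      rwa [Walk.length_concat, ho] at this
    refine ⟨z, ⟨hadj.symm, hruz, hrt⟩, by omega⟩
  have hchoice : ∀ t, ∃ z, t ∈ C.erase u → (K.Adj z t ∧ H.dist u z + 1 = H.dist u t) := by
    intro t
    by_cases ht : t ∈ C.erase u
    · obtain ⟨z, hz⟩ := hparent t ht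
      exact ⟨z, fun _ => hz⟩
    · exact ⟨t, fun h => absurd h ht⟩
  choose par hpar using hchoice
  have hmap : ∀ t ∈ C.erase u, s(par t, t) ∈ K.edgeFinset := by
    intro t ht
    rw [mem_edgeFinset, mem_edgeSet]
    exact (hpar t ht).1
  have hinj' : Set.InjOn (fun t => s(par t, t)) (C.erase u : Set V) := by
    intro t1 h1 t2 h2 heq
    simp only at heq
    rcases Sym2.eq_iff.mp heq with ⟨-, ht⟩ | ⟨hz, ht⟩
    · exact ht
    · exfalso
      have e1 := (hpar t1 (Finset.mem_coe.mp h1)).2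
      have e2 := (hpar t2 (Finset.mem_coe.mp h2)).2
      rw [hz] at e1
      rw [← ht] at e2
      omega
  have hlow : C.card ≤ K.edgeFinset.card + 1 := by
    have h1 : (C.erase u).card ≤ K.edgeFinset.card :=
      Finset.card_le_card_of_injOn _ (fun t ht => hmap t ht) hinj'
    have h2 : (C.erase u).card = C.card - 1 := Finset.card_erase_of_mem hCu
    have h3 : 1 ≤ C.card := Finset.card_pos.mpr ⟨u, hCu⟩
    omega
  omega

lemma F1 {V : Type*} {G' : SimpleGraph V} {k : ℕ} {y0 y1 : V}
    (hF0 : ∀ c', IsProperEdgeColoring G' k c' →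
      ∀ σ, σ ∈ missing G' k c' y0 → σ ∈ missing G' k c' y1 → False)
    {c : Sym2 V → ℕ} (hc : IsProperEdgeColoring G' k c) {x y : ℕ}
    (hx : x ∈ missing G' k c y0) (hy : y ∈ missing G' k c y1) (hxy : x ≠ y) :
    (Hg G' c x y).Reachable y0 y1 := by
  by_contra h
  apply hF0 (swap G' c x y y0) (swap_proper hc hx.1 hy.1) y
  · rw [missing_swap_y hxy hx.1 hy.1 (Reachable.refl y0)]
    exact hx
  · rw [missing_swap_not_reach h]
    exact hy

lemma e2_ne_e3 {V : Type*} {G' : SimpleGraph V} {k : ℕ} {c : Sym2 V → ℕ}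
    (hc : IsProperEdgeColoring G' k c) {y1 y2 y3 : V}
    (h12' : G'.Adj y1 y2) (h23' : G'.Adj y2 y3) (h13d : y1 ≠ y3) :
    c s(y1, y2) ≠ c s(y2, y3) := by
  have hne : s(y1, y2) ≠ s(y2, y3) := by
    intro hE
    rcases Sym2.eq_iff.mp hE with ⟨h1, -⟩ | ⟨h1, -⟩
    · exact h12'.ne h1
    · exact h13d h1
  exact hc.2 _ ((G'.mem_edgeSet).mpr h12') _ ((G'.mem_edgeSet).mpr h23') hne
    ⟨y2, Sym2.mem_mk_right _ _, Sym2.mem_mk_left _ _⟩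

section Chain

variable {V : Type*} [Fintype V] {G' : SimpleGraph V} {k : ℕ} {y0 y1 y2 y3 : V}

/-- Win pattern W1: the color of `e2` is missing at `y0` and `y3`, and the color of `e3`
is missing at `y1`. -/
lemma F3
    (hF0 : ∀ c', IsProperEdgeColoring G' k c' →
      ∀ σ, σ ∈ missing G' k c' y0 → σ ∈ missing G' k c' y1 → False)
    (h12' : G'.Adj y1 y2) (h23' : G'.Adj y2 y3)
    (h01d : y0 ≠ y1) (h03d : y0 ≠ y3) (h13d : y1 ≠ y3)
    (c : Sym2 V → ℕ) (hc : IsProperEdgeColoring G' k c) {δ ε : ℕ}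
    (hδ0 : δ ∈ missing G' k c y0) (hδ3 : δ ∈ missing G' k c y3)
    (he2 : c s(y1, y2) = δ) (he3 : c s(y2, y3) = ε)
    (hε1 : ε ∈ missing G' k c y1) : False := by
  have presεy3 : pres G' c y3 ε := ⟨y2, h23'.symm, by rw [Sym2.eq_swap]; exact he3⟩
  have hδε : δ ≠ ε := fun h => hδ3.2 (by rw [h]; exact presεy3)
  have R01 := F1 hF0 hc hδ0 hε1 hδε
  have hA12 : (Hg G' c δ ε).Adj y1 y2 := ⟨h12', Or.inl he2⟩
  have hA23 : (Hg G' c δ ε).Adj y2 y3 := ⟨h23', Or.inr he3⟩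
  exact F2 hc δ ε h01d h03d h13d (Or.inl hδ0.2) (Or.inr hε1.2) (Or.inl hδ3.2)
    R01 (R01.trans (hA12.reachable.trans hA23.reachable))

/-- State S win: `δ = c(e2)` missing at `y0,y3`; `ρ` missing at `y1,y3`; `c(e3) = γ`
missing at `y0`. -/
lemma F4
    (hF0 : ∀ c', IsProperEdgeColoring G' k c' →
      ∀ σ, σ ∈ missing G' k c' y0 → σ ∈ missing G' k c' y1 → False)
    (h12' : G'.Adj y1 y2) (h23' : G'.Adj y2 y3)
    (h01d : y0 ≠ y1) (h03d : y0 ≠ y3) (h13d : y1 ≠ y3)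
    (c : Sym2 V → ℕ) (hc : IsProperEdgeColoring G' k c) {δ ρ γ : ℕ}
    (hδ0 : δ ∈ missing G' k c y0) (hδ3 : δ ∈ missing G' k c y3)
    (he2 : c s(y1, y2) = δ)
    (hρ1 : ρ ∈ missing G' k c y1) (hρ3 : ρ ∈ missing G' k c y3)
    (he3 : c s(y2, y3) = γ) (hγ0 : γ ∈ missing G' k c y0) : False := by
  have presδy1 : pres G' c y1 δ := ⟨y2, h12', he2⟩
  have presγy3 : pres G' c y3 γ := ⟨y2, h23'.symm, by rw [Sym2.eq_swap]; exact he3⟩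
  have hγρ : γ ≠ ρ := fun h => hρ3.2 (by rw [← h]; exact presγy3)
  have hδρ : δ ≠ ρ := fun h => hρ1.2 (by rw [← h]; exact presδy1)
  have hδγ : δ ≠ γ := by rw [← he2, ← he3]; exact e2_ne_e3 hc h12' h23' h13d
  have R01 := F1 hF0 hc hγ0 hρ1 hγρ
  by_cases hR3 : (Hg G' c γ ρ).Reachable y0 y3
  · exact F2 hc γ ρ h01d h03d h13d (Or.inl hγ0.2) (Or.inr hρ1.2) (Or.inr hρ3.2) R01 hR3
  · set c' := swap G' c γ ρ y3 with hc'
    have hprop := swap_proper (a := y3) hc hγ0.1 hρ1.1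
    have hnr0 : ¬ (Hg G' c γ ρ).Reachable y3 y0 := fun h => hR3 h.symm
    have hnr1 : ¬ (Hg G' c γ ρ).Reachable y3 y1 := fun h => hR3 (R01.trans h.symm)
    have hδ0' : δ ∈ missing G' k c' y0 := (missing_swap_not_reach hnr0 δ).mpr hδ0
    have hδ3' : δ ∈ missing G' k c' y3 := (missing_swap_other hδγ hδρ).mpr hδ3
    have hρ1' : ρ ∈ missing G' k c' y1 := (missing_swap_not_reach hnr1 ρ).mpr hρ1
    have he2' : c' s(y1, y2) = δ := by
      rw [hc', swap_eq_of_not_color (by rw [he2]; exact hδγ) (by rw [he2]; exact hδρ)]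
      exact he2
    have he3' : c' s(y2, y3) = ρ := by
      have hc32 : c s(y3, y2) = γ := by rw [Sym2.eq_swap]; exact he3
      have hfire : swap G' c γ ρ y3 s(y3, y2) = swc γ ρ (c s(y3, y2)) :=
        swap_fire h23'.symm (Or.inl hc32) (Reachable.refl y3)
      rw [show s(y2, y3) = s(y3, y2) from Sym2.eq_swap, hc', hfire, hc32, swc_x]
    exact F3 hF0 h12' h23' h01d h03d h13d c' hprop hδ0' hδ3' he2' he3' hρ1'

/-- State Z win: both `δ = c(e2)` and `y'` missing at `y0` and `y3`, `c(e3) = γ`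
missing at `y0`. -/
lemma F5
    (hF0 : ∀ c', IsProperEdgeColoring G' k c' →
      ∀ σ, σ ∈ missing G' k c' y0 → σ ∈ missing G' k c' y1 → False)
    (hpi : ∀ c', IsProperEdgeColoring G' k c' → ∃ π, π ∈ missing G' k c' y1)
    (h12' : G'.Adj y1 y2) (h23' : G'.Adj y2 y3)
    (h01d : y0 ≠ y1) (h03d : y0 ≠ y3) (h13d : y1 ≠ y3)
    (c : Sym2 V → ℕ) (hc : IsProperEdgeColoring G' k c) {δ y' γ : ℕ}
    (hδ0 : δ ∈ missing G' k c y0) (hδ3 : δ ∈ missing G' k c y3)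
    (he2 : c s(y1, y2) = δ)
    (hy'0 : y' ∈ missing G' k c y0) (hy'3 : y' ∈ missing G' k c y3) (hy'δ : y' ≠ δ)
    (he3 : c s(y2, y3) = γ) (hγ0 : γ ∈ missing G' k c y0) : False := by
  obtain ⟨π, hπ1⟩ := hpi c hc
  have presδy1 : pres G' c y1 δ := ⟨y2, h12', he2⟩
  have presγy3 : pres G' c y3 γ := ⟨y2, h23'.symm, by rw [Sym2.eq_swap]; exact he3⟩
  have hπδ : π ≠ δ := fun h => hπ1.2 (by rw [h]; exact presδy1)
  have hπγ : π ≠ γ := fun h => hF0 c hc γ hγ0 (by rw [← h]; exact hπ1)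
  by_cases hπ3 : π ∈ missing G' k c y3
  · exact F4 hF0 h12' h23' h01d h03d h13d c hc hδ0 hδ3 he2 hπ1 hπ3 he3 hγ0
  · have hy'π : y' ≠ π := fun h => hF0 c hc y' hy'0 (by rw [h]; exact hπ1)
    have R01 := F1 hF0 hc hy'0 hπ1 hy'π
    by_cases hR3 : (Hg G' c y' π).Reachable y0 y3
    · exact F2 hc y' π h01d h03d h13d (Or.inl hy'0.2) (Or.inr hπ1.2) (Or.inl hy'3.2) R01 hR3
    · set c' := swap G' c y' π y3 with hc'
      have hprop := swap_proper (a := y3) hc hy'0.1 hπ1.1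
      have hnr0 : ¬ (Hg G' c y' π).Reachable y3 y0 := fun h => hR3 h.symm
      have hnr1 : ¬ (Hg G' c y' π).Reachable y3 y1 := fun h => hR3 (R01.trans h.symm)
      have hπ3' : π ∈ missing G' k c' y3 :=
        (missing_swap_y hy'π hy'0.1 hπ1.1 (Reachable.refl y3)).mpr hy'3
      have hπ1' : π ∈ missing G' k c' y1 := (missing_swap_not_reach hnr1 π).mpr hπ1
      have hδ0' : δ ∈ missing G' k c' y0 := (missing_swap_not_reach hnr0 δ).mpr hδ0
      have hδ3' : δ ∈ missing G' k c' y3 :=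
        (missing_swap_other (Ne.symm hy'δ) (Ne.symm hπδ)).mpr hδ3
      have he2' : c' s(y1, y2) = δ := by
        rw [hc', swap_eq_of_not_color (by rw [he2]; exact (Ne.symm hy'δ))
          (by rw [he2]; exact (Ne.symm hπδ))]
        exact he2
      have hγy' : γ ≠ y' := fun h => hy'3.2 (by rw [← h]; exact presγy3)
      have he3' : c' s(y2, y3) = γ := by
        rw [hc', swap_eq_of_not_color (by rw [he3]; exact hγy')
          (by rw [he3]; exact (Ne.symm hπγ))]
        exact he3
      have hγ0' : γ ∈ missing G' k c' y0 := (missing_swap_not_reach hnr0 γ).mpr hγ0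
      exact F4 hF0 h12' h23' h01d h03d h13d c' hprop hδ0' hδ3' he2' hπ1' hπ3' he3' hγ0'

/-- Case: a color `ρ` missing at `y1` and `y3`, and `c(e3) = γ` missing at `y1`. -/
lemma F6a
    (hF0 : ∀ c', IsProperEdgeColoring G' k c' →
      ∀ σ, σ ∈ missing G' k c' y0 → σ ∈ missing G' k c' y1 → False)
    (h12' : G'.Adj y1 y2) (h23' : G'.Adj y2 y3)
    (h01d : y0 ≠ y1) (h03d : y0 ≠ y3) (h13d : y1 ≠ y3)
    (c : Sym2 V → ℕ) (hc : IsProperEdgeColoring G' k c) {δ ρ γ : ℕ}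
    (hδ0 : δ ∈ missing G' k c y0) (he2 : c s(y1, y2) = δ)
    (hρ1 : ρ ∈ missing G' k c y1) (hρ3 : ρ ∈ missing G' k c y3)
    (he3 : c s(y2, y3) = γ) (hγ1 : γ ∈ missing G' k c y1) : False := by
  have presδy1 : pres G' c y1 δ := ⟨y2, h12', he2⟩
  have presγy3 : pres G' c y3 γ := ⟨y2, h23'.symm, by rw [Sym2.eq_swap]; exact he3⟩
  have hδρ : δ ≠ ρ := fun h => hρ1.2 (by rw [← h]; exact presδy1)
  have hγρ : γ ≠ ρ := fun h => hρ3.2 (by rw [← h]; exact presγy3)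
  have hδγ : δ ≠ γ := by rw [← he2, ← he3]; exact e2_ne_e3 hc h12' h23' h13d
  have R01 := F1 hF0 hc hδ0 hρ1 hδρ
  by_cases hR3 : (Hg G' c δ ρ).Reachable y0 y3
  · exact F2 hc δ ρ h01d h03d h13d (Or.inl hδ0.2) (Or.inr hρ1.2) (Or.inr hρ3.2) R01 hR3
  · set c' := swap G' c δ ρ y3 with hc'
    have hprop := swap_proper (a := y3) hc hδ0.1 hρ1.1
    have hnr0 : ¬ (Hg G' c δ ρ).Reachable y3 y0 := fun h => hR3 h.symm
    have hnr1 : ¬ (Hg G' c δ ρ).Reachable y3 y1 := fun h => hR3 (R01.trans h.symm)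
    have hδ3' : δ ∈ missing G' k c' y3 :=
      (missing_swap_x hδρ hδ0.1 hρ1.1 (Reachable.refl y3)).mpr hρ3
    have hδ0' : δ ∈ missing G' k c' y0 := (missing_swap_not_reach hnr0 δ).mpr hδ0
    have he2' : c' s(y1, y2) = δ := by
      rw [hc', swap_eq_of_not_reach hnr1]
      exact he2
    have he3' : c' s(y2, y3) = γ := by
      rw [hc', swap_eq_of_not_color (by rw [he3]; exact (Ne.symm hδγ))
        (by rw [he3]; exact hγρ)]
      exact he3
    have hγ1' : γ ∈ missing G' k c' y1 := (missing_swap_not_reach hnr1 γ).mpr hγ1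
    exact F3 hF0 h12' h23' h01d h03d h13d c' hprop hδ0' hδ3' he2' he3' hγ1'

/-- Case: `ρ` missing at `y1,y3`; `c(e3) = γ` missing at `y0`; a second color `y'`
missing at `y3` and at `y0` or `y1`. -/
lemma F6b
    (hF0 : ∀ c', IsProperEdgeColoring G' k c' →
      ∀ σ, σ ∈ missing G' k c' y0 → σ ∈ missing G' k c' y1 → False)
    (hpi : ∀ c', IsProperEdgeColoring G' k c' → ∃ π, π ∈ missing G' k c' y1)
    (h12' : G'.Adj y1 y2) (h23' : G'.Adj y2 y3)
    (h01d : y0 ≠ y1) (h03d : y0 ≠ y3) (h13d : y1 ≠ y3)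
    (c : Sym2 V → ℕ) (hc : IsProperEdgeColoring G' k c) {δ ρ γ y' : ℕ}
    (hδ0 : δ ∈ missing G' k c y0) (he2 : c s(y1, y2) = δ)
    (hρ1 : ρ ∈ missing G' k c y1) (hρ3 : ρ ∈ missing G' k c y3)
    (he3 : c s(y2, y3) = γ) (hγ0 : γ ∈ missing G' k c y0)
    (hy'3 : y' ∈ missing G' k c y3)
    (hy'01 : y' ∈ missing G' k c y0 ∨ y' ∈ missing G' k c y1)
    (hy'ρ : y' ≠ ρ) (hy'δ : y' ≠ δ) : False := by
  have presδy1 : pres G' c y1 δ := ⟨y2, h12', he2⟩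
  have presγy3 : pres G' c y3 γ := ⟨y2, h23'.symm, by rw [Sym2.eq_swap]; exact he3⟩
  have hδρ : δ ≠ ρ := fun h => hρ1.2 (by rw [← h]; exact presδy1)
  have hγρ : γ ≠ ρ := fun h => hρ3.2 (by rw [← h]; exact presγy3)
  have hδγ : δ ≠ γ := by rw [← he2, ← he3]; exact e2_ne_e3 hc h12' h23' h13d
  have R01 := F1 hF0 hc hδ0 hρ1 hδρ
  by_cases hR3 : (Hg G' c δ ρ).Reachable y0 y3
  · exact F2 hc δ ρ h01d h03d h13d (Or.inl hδ0.2) (Or.inr hρ1.2) (Or.inr hρ3.2) R01 hR3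
  · set c' := swap G' c δ ρ y3 with hc'
    have hprop := swap_proper (a := y3) hc hδ0.1 hρ1.1
    have hnr0 : ¬ (Hg G' c δ ρ).Reachable y3 y0 := fun h => hR3 h.symm
    have hnr1 : ¬ (Hg G' c δ ρ).Reachable y3 y1 := fun h => hR3 (R01.trans h.symm)
    have hδ3' : δ ∈ missing G' k c' y3 :=
      (missing_swap_x hδρ hδ0.1 hρ1.1 (Reachable.refl y3)).mpr hρ3
    have hδ0' : δ ∈ missing G' k c' y0 := (missing_swap_not_reach hnr0 δ).mpr hδ0
    have he2' : c' s(y1, y2) = δ := by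
      rw [hc', swap_eq_of_not_reach hnr1]
      exact he2
    have he3' : c' s(y2, y3) = γ := by
      rw [hc', swap_eq_of_not_color (by rw [he3]; exact (Ne.symm hδγ))
        (by rw [he3]; exact hγρ)]
      exact he3
    have hγ0' : γ ∈ missing G' k c' y0 := (missing_swap_not_reach hnr0 γ).mpr hγ0
    have hy'3' : y' ∈ missing G' k c' y3 := (missing_swap_other hy'δ hy'ρ).mpr hy'3
    rcases hy'01 with h | h
    · exact F5 hF0 hpi h12' h23' h01d h03d h13d c' hprop hδ0' hδ3' he2'
        ((missing_swap_not_reach hnr0 y').mpr h) hy'3' hy'δ he3' hγ0'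
    · exact F4 hF0 h12' h23' h01d h03d h13d c' hprop hδ0' hδ3' he2'
        ((missing_swap_not_reach hnr1 y').mpr h) hy'3' he3' hγ0'

end Chain

end Stmt9

theorem stmt_9 {V : Type*} [Fintype V] (G : SimpleGraph V) [DecidableRel G.Adj]
    (hclass2 : chromIndex G = G.maxDegree + 1) (y0 y1 y2 y3 : V)
    (hdist : y0 ≠ y1 ∧ y0 ≠ y2 ∧ y0 ≠ y3 ∧ y1 ≠ y2 ∧ y1 ≠ y3 ∧ y2 ≠ y3)
    (h01 : G.Adj y0 y1) (h12 : G.Adj y1 y2) (h23 : G.Adj y2 y3)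
    (hcrit : chromIndex (G.deleteEdges {s(y0, y1)}) < chromIndex G)
    (c : Sym2 V → ℕ)
    (hc : IsProperEdgeColoring (G.deleteEdges {s(y0, y1)}) G.maxDegree c)
    (hK2 : c s(y1, y2) ∈ missing (G.deleteEdges {s(y0, y1)}) G.maxDegree c y0 ∪
      missing (G.deleteEdges {s(y0, y1)}) G.maxDegree c y1)
    (hK3 : c s(y2, y3) ∈ missing (G.deleteEdges {s(y0, y1)}) G.maxDegree c y0 ∪
      missing (G.deleteEdges {s(y0, y1)}) G.maxDegree c y1 ∪
      missing (G.deleteEdges {s(y0, y1)}) G.maxDegree c y2) :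
    (missing (G.deleteEdges {s(y0, y1)}) G.maxDegree c y3 ∩
      (missing (G.deleteEdges {s(y0, y1)}) G.maxDegree c y0 ∪
        missing (G.deleteEdges {s(y0, y1)}) G.maxDegree c y1)).ncard ≤ 1 := by
  classical
  obtain ⟨h01d, h02d, h03d, h12d, h13d, h23d⟩ := hdist
  set G' := G.deleteEdges {s(y0, y1)} with hG'
  set k := G.maxDegree with hk
  have h12' : G'.Adj y1 y2 := by
    rw [hG', deleteEdges_adj]
    refine ⟨h12, ?_⟩
    simp only [Set.mem_singleton_iff]
    intro hE
    rcases Sym2.eq_iff.mp hE with ⟨h1, -⟩ | ⟨-, h2⟩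
    · exact h01d h1.symm
    · exact h02d h2.symm
  have h23' : G'.Adj y2 y3 := by
    rw [hG', deleteEdges_adj]
    refine ⟨h23, ?_⟩
    simp only [Set.mem_singleton_iff]
    intro hE
    rcases Sym2.eq_iff.mp hE with ⟨h1, -⟩ | ⟨h1, -⟩
    · exact h02d h1.symm
    · exact h12d h1.symm
  have hF0 : ∀ c', IsProperEdgeColoring G' k c' →
      ∀ σ, σ ∈ missing G' k c' y0 → σ ∈ missing G' k c' y1 → False :=
    fun c' hc' σ a b => Stmt9.F0 G hclass2 y0 y1 h01 c' hc' σ a b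
  have hpi : ∀ c', IsProperEdgeColoring G' k c' → ∃ π, π ∈ missing G' k c' y1 := by
    intro c' hc'
    have hsub : G'.neighborFinset y1 ⊆ G.neighborFinset y1 := by
      intro n hn
      rw [mem_neighborFinset] at hn ⊢
      rw [hG', deleteEdges_adj] at hn
      exact hn.1
    have hy0mem : y0 ∈ G.neighborFinset y1 := by
      rw [mem_neighborFinset]; exact h01.symm
    have hy0nmem : y0 ∉ G'.neighborFinset y1 := by
      rw [mem_neighborFinset, hG', deleteEdges_adj]
      rintro ⟨-, h⟩
      exact h (by rw [Sym2.eq_swap]; rfl)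
    have hlt : G'.degree y1 < G.degree y1 :=
      Finset.card_lt_card ((Finset.ssubset_iff_of_subset hsub).mpr ⟨y0, hy0mem, hy0nmem⟩)
    have hdegk : G.degree y1 ≤ k := G.degree_le_maxDegree y1
    have hPcard : ((G'.neighborFinset y1).image (fun n => c' s(y1, n))).card < k :=
      lt_of_le_of_lt Finset.card_image_le (lt_of_lt_of_le hlt hdegk)
    have hex : ∃ π ∈ Finset.Icc 1 k, π ∉ (G'.neighborFinset y1).image (fun n => c' s(y1, n)) := by
      by_contra h
      push_neg at h
      have hs := Finset.card_le_card h
      rw [Nat.card_Icc] at hs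
      omega
    obtain ⟨π, hπIcc, hπP⟩ := hex
    refine ⟨π, hπIcc, ?_⟩
    rintro ⟨n, hn, hcol⟩
    refine hπP (Finset.mem_image.mpr ⟨n, ?_, hcol⟩)
    rw [mem_neighborFinset]; exact hn
  by_contra hcard
  push_neg at hcard
  have hfin : (missing G' k c y3 ∩ (missing G' k c y0 ∪ missing G' k c y1)).Finite := by
    apply Set.Finite.subset (Finset.Icc 1 k).finite_toSet
    intro z hz
    exact Finset.mem_coe.mpr hz.1.1
  obtain ⟨x, y, hxmem, hymem, hxy⟩ := (Set.one_lt_ncard_iff hfin).mp hcard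
  obtain ⟨hx3, hx01⟩ := hxmem
  obtain ⟨hy3, hy01⟩ := hymem
  have hK2' : c s(y1, y2) ∈ missing G' k c y0 := by
    rcases hK2 with h | h
    · exact h
    · exact (h.2 ⟨y2, h12', rfl⟩).elim
  have hγ01 : c s(y2, y3) ∈ missing G' k c y0 ∪ missing G' k c y1 := by
    rcases hK3 with h | h
    · exact h
    · exact (h.2 ⟨y3, h23', rfl⟩).elim
  have presγ3 : Stmt9.pres G' c y3 (c s(y2, y3)) := ⟨y2, h23'.symm, by rw [Sym2.eq_swap]⟩
  have hγx : c s(y2, y3) ≠ x := fun h => hx3.2 (h ▸ presγ3)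
  have hγy : c s(y2, y3) ≠ y := fun h => hy3.2 (h ▸ presγ3)
  by_cases hδ3 : c s(y1, y2) ∈ missing G' k c y3
  · -- c(e2) is missing at y3
    rcases hγ01 with hγ0 | hγ1
    · have hρ' : ∃ ρ', ρ' ≠ c s(y1, y2) ∧ ρ' ∈ missing G' k c y3 ∧
          (ρ' ∈ missing G' k c y0 ∨ ρ' ∈ missing G' k c y1) := by
        by_cases hxδ : x = c s(y1, y2)
        · exact ⟨y, by rw [← hxδ]; exact (Ne.symm hxy), hy3, hy01⟩
        · exact ⟨x, hxδ, hx3, hx01⟩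
      obtain ⟨ρ', hρδ, hρ3, hρ01⟩ := hρ'
      rcases hρ01 with hρ0 | hρ1
      · exact Stmt9.F5 hF0 hpi h12' h23' h01d h03d h13d c hc hK2' hδ3 rfl hρ0 hρ3 hρδ rfl hγ0
      · exact Stmt9.F4 hF0 h12' h23' h01d h03d h13d c hc hK2' hδ3 rfl hρ1 hρ3 rfl hγ0
    · exact Stmt9.F3 hF0 h12' h23' h01d h03d h13d c hc hK2' hδ3 rfl rfl hγ1
  · -- c(e2) is present at y3
    have hxδ : x ≠ c s(y1, y2) := fun h => hδ3 (h ▸ hx3)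
    have hyδ : y ≠ c s(y1, y2) := fun h => hδ3 (h ▸ hy3)
    rcases hx01 with hx0 | hx1
    · rcases hy01 with hy0 | hy1
      · -- x, y both missing at y0
        rcases hγ01 with hγ0 | hγ1
        · -- γ missing at y0 : pick a color missing at y1
          obtain ⟨π, hπ1⟩ := hpi c hc
          have hπx : π ≠ x := fun h => hF0 c hc x hx0 (h ▸ hπ1)
          have hπy : π ≠ y := fun h => hF0 c hc y hy0 (h ▸ hπ1)
          have hπγ : π ≠ c s(y2, y3) := fun h => hF0 c hc _ hγ0 (h ▸ hπ1)
          have hπδ : π ≠ c s(y1, y2) := fun h => hπ1.2 ⟨y2, h12', h.symm⟩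
          by_cases hπ3 : π ∈ missing G' k c y3
          · exact Stmt9.F6b hF0 hpi h12' h23' h01d h03d h13d c hc hK2' rfl hπ1 hπ3 rfl hγ0
              hx3 (Or.inl hx0) (Ne.symm hπx) hxδ
          · -- swap on the (x, π) component of y3
            have hxπ : x ≠ π := Ne.symm hπx
            have R01 := Stmt9.F1 hF0 hc hx0 hπ1 hxπ
            by_cases hR3 : (Stmt9.Hg G' c x π).Reachable y0 y3
            · exact Stmt9.F2 hc x π h01d h03d h13d (Or.inl hx0.2) (Or.inr hπ1.2)
                (Or.inl hx3.2) R01 hR3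
            · set c2 := Stmt9.swap G' c x π y3 with hc2
              have hprop := Stmt9.swap_proper (a := y3) hc hx0.1 hπ1.1
              have hnr0 : ¬ (Stmt9.Hg G' c x π).Reachable y3 y0 := fun h => hR3 h.symm
              have hnr1 : ¬ (Stmt9.Hg G' c x π).Reachable y3 y1 :=
                fun h => hR3 (R01.trans h.symm)
              have hπ3' : π ∈ missing G' k c2 y3 :=
                (Stmt9.missing_swap_y hxπ hx0.1 hπ1.1 (Reachable.refl y3)).mpr hx3
              have hπ1' : π ∈ missing G' k c2 y1 :=
                (Stmt9.missing_swap_not_reach hnr1 π).mpr hπ1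
              have hy3' : y ∈ missing G' k c2 y3 :=
                (Stmt9.missing_swap_other (Ne.symm hxy) (Ne.symm hπy)).mpr hy3
              have hy0' : y ∈ missing G' k c2 y0 :=
                (Stmt9.missing_swap_not_reach hnr0 y).mpr hy0
              have he2' : c2 s(y1, y2) = c s(y1, y2) := by
                rw [hc2, Stmt9.swap_eq_of_not_color (Ne.symm hxδ) (Ne.symm hπδ)]
              have hδ0' : c s(y1, y2) ∈ missing G' k c2 y0 :=
                (Stmt9.missing_swap_not_reach hnr0 _).mpr hK2'
              have he3' : c2 s(y2, y3) = c s(y2, y3) := by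
                rw [hc2, Stmt9.swap_eq_of_not_color hγx (Ne.symm hπγ)]
              have hγ0' : c s(y2, y3) ∈ missing G' k c2 y0 :=
                (Stmt9.missing_swap_not_reach hnr0 _).mpr hγ0
              exact Stmt9.F6b hF0 hpi h12' h23' h01d h03d h13d c2 hprop hδ0' he2' hπ1' hπ3'
                he3' hγ0' hy3' (Or.inl hy0') (Ne.symm hπy) hyδ
        · -- γ missing at y1 : swap on the (x, γ) component of y3
          have hxγ : x ≠ c s(y2, y3) := Ne.symm hγx
          have R01 := Stmt9.F1 hF0 hc hx0 hγ1 hxγ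
          by_cases hR3 : (Stmt9.Hg G' c x (c s(y2, y3))).Reachable y0 y3
          · exact Stmt9.F2 hc x (c s(y2, y3)) h01d h03d h13d (Or.inl hx0.2) (Or.inr hγ1.2)
              (Or.inl hx3.2) R01 hR3
          · set c2 := Stmt9.swap G' c x (c s(y2, y3)) y3 with hc2
            have hprop := Stmt9.swap_proper (a := y3) hc hx0.1 hγ1.1
            have hnr0 : ¬ (Stmt9.Hg G' c x (c s(y2, y3))).Reachable y3 y0 :=
              fun h => hR3 h.symm
            have hnr1 : ¬ (Stmt9.Hg G' c x (c s(y2, y3))).Reachable y3 y1 :=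
              fun h => hR3 (R01.trans h.symm)
            have hc32 : c s(y3, y2) = c s(y2, y3) := by rw [Sym2.eq_swap]
            have hfire : c2 s(y3, y2) = Stmt9.swc x (c s(y2, y3)) (c s(y3, y2)) := by
              rw [hc2]
              exact Stmt9.swap_fire h23'.symm (Or.inr hc32) (Reachable.refl y3)
            have he3' : c2 s(y2, y3) = x := by
              rw [show s(y2, y3) = s(y3, y2) from Sym2.eq_swap, hfire, hc32,
                Stmt9.swc_y hxγ]
            have hδγ : c s(y1, y2) ≠ c s(y2, y3) := Stmt9.e2_ne_e3 hc h12' h23' h13d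
            have he2' : c2 s(y1, y2) = c s(y1, y2) := by
              rw [hc2, Stmt9.swap_eq_of_not_color (Ne.symm hxδ) hδγ]
            have hδ0' : c s(y1, y2) ∈ missing G' k c2 y0 :=
              (Stmt9.missing_swap_not_reach hnr0 _).mpr hK2'
            have hγ3' : c s(y2, y3) ∈ missing G' k c2 y3 :=
              (Stmt9.missing_swap_y hxγ hx0.1 hγ1.1 (Reachable.refl y3)).mpr hx3
            have hγ1' : c s(y2, y3) ∈ missing G' k c2 y1 :=
              (Stmt9.missing_swap_not_reach hnr1 _).mpr hγ1
            have hx0' : x ∈ missing G' k c2 y0 :=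
              (Stmt9.missing_swap_not_reach hnr0 x).mpr hx0
            have hy3' : y ∈ missing G' k c2 y3 :=
              (Stmt9.missing_swap_other (Ne.symm hxy) (Ne.symm hγy)).mpr hy3
            have hy0' : y ∈ missing G' k c2 y0 :=
              (Stmt9.missing_swap_not_reach hnr0 y).mpr hy0
            exact Stmt9.F6b hF0 hpi h12' h23' h01d h03d h13d c2 hprop hδ0' he2' hγ1' hγ3'
              he3' hx0' hy3' (Or.inl hy0') (Ne.symm hγy) hyδ
      · -- y missing at y1 : use ρ := y, second color x
        rcases hγ01 with hγ0 | hγ1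
        · exact Stmt9.F6b hF0 hpi h12' h23' h01d h03d h13d c hc hK2' rfl hy1 hy3 rfl hγ0
            hx3 (Or.inl hx0) hxy hxδ
        · exact Stmt9.F6a hF0 h12' h23' h01d h03d h13d c hc hK2' rfl hy1 hy3 rfl hγ1
    · -- x missing at y1 : use ρ := x, second color y
      rcases hγ01 with hγ0 | hγ1
      · exact Stmt9.F6b hF0 hpi h12' h23' h01d h03d h13d c hc hK2' rfl hx1 hx3 rfl hγ0
          hy3 hy01 (Ne.symm hxy) hyδ
      · exact Stmt9.F6a hF0 h12' h23' h01d h03d h13d c hc hK2' rfl hx1 hx3 rfl hγ1
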